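/- For t ∈ [0,1] define β_t*(s) = (t e^{(1−t)s} + (1−t) e^{−ts} − 1)/(t(1−t)) for t ∈ (0,1), β₀*(s) = e^s − s − 1, β₁*(s) = e^{−s} + s − 1, and let β_t(u) = sup_{s∈ℝ}(su − β_t*(s)) be its Legendre transform. Then the monotone conjugate β_t^⊛(u) := sup_{y ≥ 0}(uy − β_t(y)) satisfies β_t^⊛(u) = β_t*([u]₊) for all u ∈ ℝ. -/

import Mathlib

/-- For `t ∈ [0,1]`, with `β_t*` as in the paper and
`β_t(u) = sup_s (su − β_t*(s))` its Legendre transform (with values in the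
extended reals), the monotone conjugate `β_t^⊛(u) = sup_{y ≥ 0}(uy − β_t(y))`
satisfies `β_t^⊛(u) = β_t*([u]₊)` for all `u ∈ ℝ`. -/
theorem stmt_11 (t : ℝ) (ht : t ∈ Set.Icc (0 : ℝ) 1)
    (B : ℝ → ℝ)
    (hB : ∀ s : ℝ, B s =
      if t = 0 then Real.exp s - s - 1
      else if t = 1 then Real.exp (-s) + s - 1
      else (t * Real.exp ((1 - t) * s) + (1 - t) * Real.exp (-t * s) - 1) /
        (t * (1 - t)))
    (β : ℝ → EReal)
    (hβ : ∀ u : ℝ, β u = ⨆ s : ℝ, ((s * u - B s : ℝ) : EReal)) :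
    ∀ u : ℝ,
      (⨆ y : {y : ℝ // 0 ≤ y}, (((u * (y : ℝ) : ℝ) : EReal) - β (y : ℝ))) =
        ((B (max u 0) : ℝ) : EReal) := by
  obtain ⟨ht0, ht1⟩ := ht
  set D : ℝ → ℝ := fun v =>
    if t = 0 then Real.exp v - 1
    else if t = 1 then 1 - Real.exp (-v)
    else Real.exp ((1 - t) * v) - Real.exp (-t * v) with hD
  have key : ∀ s v : ℝ, s * D v - B s ≤ v * D v - B v := by
    intro s v
    rw [hB, hB]
    simp only [hD]
    by_cases h0 : t = 0
    · subst h0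
      norm_num
      have h : Real.exp v * (s - v + 1) ≤ Real.exp s :=
        calc Real.exp v * (s - v + 1) ≤ Real.exp v * Real.exp (s - v) :=
              mul_le_mul_of_nonneg_left (Real.add_one_le_exp _) (Real.exp_pos v).le
          _ = Real.exp s := by rw [← Real.exp_add]; congr 1; ring
      nlinarith [h]
    · by_cases h1 : t = 1
      · subst h1
        norm_num
        have h : Real.exp (-v) * (v - s + 1) ≤ Real.exp (-s) :=
          calc Real.exp (-v) * (v - s + 1) ≤ Real.exp (-v) * Real.exp (v - s) :=
                mul_le_mul_of_nonneg_left (Real.add_one_le_exp _) (Real.exp_pos _).le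
            _ = Real.exp (-s) := by rw [← Real.exp_add]; congr 1; ring
        nlinarith [h]
      · simp only [h0, h1, if_false]
        have htp : 0 < t := lt_of_le_of_ne ht0 (Ne.symm h0)
        have htp1 : t < 1 := lt_of_le_of_ne ht1 h1
        have hc : 0 < t * (1 - t) := by nlinarith
        have h1e : Real.exp ((1 - t) * v) * ((1 - t) * (s - v) + 1) ≤ Real.exp ((1 - t) * s) :=
          calc Real.exp ((1 - t) * v) * ((1 - t) * (s - v) + 1)
              ≤ Real.exp ((1 - t) * v) * Real.exp ((1 - t) * (s - v)) :=
                mul_le_mul_of_nonneg_left (Real.add_one_le_exp _) (Real.exp_pos _).le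
            _ = Real.exp ((1 - t) * s) := by rw [← Real.exp_add]; congr 1; ring
        have h2e : Real.exp (-t * v) * (-t * (s - v) + 1) ≤ Real.exp (-t * s) :=
          calc Real.exp (-t * v) * (-t * (s - v) + 1)
              ≤ Real.exp (-t * v) * Real.exp (-t * (s - v)) :=
                mul_le_mul_of_nonneg_left (Real.add_one_le_exp _) (Real.exp_pos _).le
            _ = Real.exp (-t * s) := by rw [← Real.exp_add]; congr 1; ring
        rw [← mul_le_mul_iff_of_pos_right hc]
        field_simp
        ring_nf at h1e h2e ⊢
        nlinarith [mul_le_mul_of_nonneg_left h1e htp.le,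
          mul_le_mul_of_nonneg_left h2e (by linarith : (0:ℝ) ≤ 1 - t)]
  have hDnn : ∀ v : ℝ, 0 ≤ v → 0 ≤ D v := by
    intro v hv
    simp only [hD]
    by_cases h0 : t = 0
    · subst h0
      norm_num
      nlinarith [Real.add_one_le_exp v]
    · by_cases h1 : t = 1
      · subst h1
        norm_num
        linarith [Real.exp_le_one_iff.mpr (by linarith : -v ≤ 0)]
      · simp only [h0, h1, if_false]
        have htp : 0 < t := lt_of_le_of_ne ht0 (Ne.symm h0)
        have htp1 : t < 1 := lt_of_le_of_ne ht1 h1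
        have : Real.exp (-t * v) ≤ Real.exp ((1 - t) * v) := by
          apply Real.exp_le_exp.mpr; nlinarith
        linarith
  intro u
  set uP := max u 0 with hup
  have hup0 : 0 ≤ uP := le_max_right _ _
  have hy0 : 0 ≤ D uP := hDnn _ hup0
  have hmul : u * D uP = uP * D uP := by
    rcases le_or_gt 0 u with h | h
    · rw [hup, max_eq_left h]
    · have hz : uP = 0 := by rw [hup, max_eq_right h.le]
      have hDz : D uP = 0 := by
        rw [hz]; simp only [hD]
        split_ifs <;> simp
      rw [hDz]; ring
  apply le_antisymm
  · apply iSup_le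
    rintro ⟨y, hy⟩
    have hβy : ((uP * y - B uP : ℝ) : EReal) ≤ β y := by
      rw [hβ]; exact le_iSup (fun s => ((s * y - B s : ℝ) : EReal)) uP
    calc ((u * y : ℝ) : EReal) - β y
        ≤ ((u * y : ℝ) : EReal) - ((uP * y - B uP : ℝ) : EReal) :=
          EReal.sub_le_sub le_rfl hβy
      _ = ((u * y - (uP * y - B uP) : ℝ) : EReal) := (EReal.coe_sub _ _).symm
      _ ≤ ((B uP : ℝ) : EReal) := by
          rw [EReal.coe_le_coe_iff]
          have h1 : (u - uP) * y ≤ 0 :=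
            mul_nonpos_of_nonpos_of_nonneg (sub_nonpos.mpr (le_max_left u 0)) hy
          nlinarith
  · apply le_iSup_of_le ⟨D uP, hy0⟩
    have hβval : β (D uP) = ((uP * D uP - B uP : ℝ) : EReal) := by
      rw [hβ]
      apply le_antisymm
      · exact iSup_le fun s => EReal.coe_le_coe_iff.mpr (key s uP)
      · exact le_iSup (fun s => ((s * D uP - B s : ℝ) : EReal)) uP
    rw [hβval, ← EReal.coe_sub, EReal.coe_le_coe_iff, hmul]
    simp
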